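/- Let σ > 0, g > 0, and 0 ≤ P_F < P_D ≤ 1. Then (α_F − β_F)·β_F/(σ² + β_F·g·P)³ + (α_D − β_D)·β_D/(σ² + β_D·g·P)³ ≥ 0 holds for every P ≥ 0 if and only if 3/4 − P_F/2 − (1/4)·√(1 + 12 P_F − 12 P_F²) ≤ P_D ≤ 3/4 − P_F/2 + (1/4)·√(1 + 12 P_F − 12 P_F²). (This is the paper's Lemma characterizing the region S of detection/false-alarm probability pairs on which the second-order partial derivative of the J-divergence objective with respect to the allocated power, which equals a negative multiple of the displayed quantity, is nonpositive for all P ≥ 0.) -/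

import Mathlib

/-- `α_F = P_F(1−P_D) + P_D(P_D−P_F)` -/
noncomputable def alphaF (PD PF : ℝ) : ℝ := PF * (1 - PD) + PD * (PD - PF)

/-- `α_D = P_D(1−P_F) − P_F(P_D−P_F)` -/
noncomputable def alphaD (PD PF : ℝ) : ℝ := PD * (1 - PF) - PF * (PD - PF)

/-- `β_F = P_D(1−P_D)` -/
noncomputable def betaF (PD : ℝ) : ℝ := PD * (1 - PD)

/-- `β_D = P_F(1−P_F)` -/
noncomputable def betaD (PF : ℝ) : ℝ := PF * (1 - PF)


/-- Characterization of the region `S` on which the second-order partial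
derivative of the J-divergence objective (a negative multiple of the displayed
quantity) is nonpositive for all allocated powers `P ≥ 0`. -/
theorem second_derivative_region (σ g PD PF : ℝ)
    (hσ : 0 < σ) (hg : 0 < g)
    (hPF0 : 0 ≤ PF) (hFD : PF < PD) (hPD1 : PD ≤ 1) :
    (∀ P : ℝ, 0 ≤ P →
      0 ≤ (alphaF PD PF - betaF PD) * betaF PD / (σ ^ 2 + betaF PD * g * P) ^ 3
        + (alphaD PD PF - betaD PF) * betaD PF / (σ ^ 2 + betaD PF * g * P) ^ 3)
    ↔ (3 / 4 - PF / 2 - (1 / 4) * Real.sqrt (1 + 12 * PF - 12 * PF ^ 2) ≤ PD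
        ∧ PD ≤ 3 / 4 - PF / 2 + (1 / 4) * Real.sqrt (1 + 12 * PF - 12 * PF ^ 2)) := by
  have hPD0 : 0 < PD := lt_of_le_of_lt hPF0 hFD
  have hPF1 : PF < 1 := lt_of_lt_of_le hFD hPD1
  have hDF : 0 < PD - PF := sub_pos.mpr hFD
  have hΔ : 0 ≤ 1 + 12 * PF - 12 * PF ^ 2 := by nlinarith
  set s := Real.sqrt (1 + 12 * PF - 12 * PF ^ 2) with hsdef
  have hs0 : 0 ≤ s := Real.sqrt_nonneg _
  have hs2 : s ^ 2 = 1 + 12 * PF - 12 * PF ^ 2 := Real.sq_sqrt hΔ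
  have key : (3 / 4 - PF / 2 - (1 / 4) * s ≤ PD ∧ PD ≤ 3 / 4 - PF / 2 + (1 / 4) * s)
      ↔ 0 ≤ (2 * PD - 1) * (PD * (1 - PD)) + (1 - 2 * PF) * (PF * (1 - PF)) := by
    constructor
    · rintro ⟨h1, h2⟩
      have F : 0 ≤ (PD - (3 / 4 - PF / 2 - (1 / 4) * s)) *
          ((3 / 4 - PF / 2 + (1 / 4) * s) - PD) :=
        mul_nonneg (by linarith) (by linarith)
      have hprod : 0 ≤ (PD - PF) * ((PD - (3 / 4 - PF / 2 - (1 / 4) * s)) *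
          ((3 / 4 - PF / 2 + (1 / 4) * s) - PD)) := mul_nonneg hDF.le F
      have hs2' : (PD - PF) * s ^ 2 = (PD - PF) * (1 + 12 * PF - 12 * PF ^ 2) := by
        rw [hs2]
      nlinarith [hprod, hs2']
    · intro h
      have hQ : 2 * PD ^ 2 - (3 - 2 * PF) * PD + 1 - 3 * PF + 2 * PF ^ 2 ≤ 0 := by
        by_contra hc
        push_neg at hc
        nlinarith [mul_pos hDF hc]
      have h4 : (4 * (PD - (3 / 4 - PF / 2))) ^ 2 ≤ 1 + 12 * PF - 12 * PF ^ 2 := by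
        nlinarith [hQ]
      have hle : Real.sqrt ((4 * (PD - (3 / 4 - PF / 2))) ^ 2) ≤ s :=
        Real.sqrt_le_sqrt h4
      rw [Real.sqrt_sq_eq_abs] at hle
      have habs := abs_le.mp hle
      constructor <;> [linarith [habs.1]; linarith [habs.2]]
  rw [key]
  constructor
  · intro hall
    have h0 := hall 0 le_rfl
    have e1 : σ ^ 2 + betaF PD * g * 0 = σ ^ 2 := by ring
    have e2 : σ ^ 2 + betaD PF * g * 0 = σ ^ 2 := by ring
    rw [e1, e2, ← add_div] at h0
    have hσ6 : 0 < (σ ^ 2) ^ 3 := by positivity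
    have h0' : 0 ≤ (alphaF PD PF - betaF PD) * betaF PD
        + (alphaD PD PF - betaD PF) * betaD PF := by
      have := mul_nonneg h0 hσ6.le
      rwa [div_mul_cancel₀ _ (ne_of_gt hσ6)] at this
    simp only [alphaF, alphaD, betaF, betaD] at h0'
    by_contra hc
    push_neg at hc
    nlinarith [mul_pos hDF (neg_pos.mpr hc)]
  · intro hC1
    intro P hP
    have hbF : 0 ≤ PD * (1 - PD) := mul_nonneg hPD0.le (by linarith)
    have hbD : 0 ≤ PF * (1 - PF) := mul_nonneg hPF0 (by linarith)
    have ht : 0 ≤ g * P := mul_nonneg hg.le hP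
    have hd1 : 0 < σ ^ 2 + betaF PD * g * P := by
      have : 0 ≤ PD * (1 - PD) * g * P := by positivity
      simp only [betaF]; nlinarith [sq_nonneg σ, hσ]
    have hd2 : 0 < σ ^ 2 + betaD PF * g * P := by
      have : 0 ≤ PF * (1 - PF) * g * P := by positivity
      simp only [betaD]; nlinarith [sq_nonneg σ, hσ]
    -- C3
    have hC3 : 0 ≤ (2 * PD - 1) * (PF * (1 - PF)) + (1 - 2 * PF) * (PD * (1 - PD)) := by
      nlinarith [mul_nonneg hDF.le (sq_nonneg (1 - PD - PF))]
    -- C2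
    have hC2 : 0 ≤ (2 * PD - 1) * (PF * (1 - PF)) ^ 2
        + (1 - 2 * PF) * (PD * (1 - PD)) ^ 2 := by
      rcases le_or_gt (PD + PF) 1 with hcase | hcase
      · have hB : 0 ≤ 1 - 2 * PF := by linarith
        have h1 : 0 ≤ PF * (1 - PF) *
            ((2 * PD - 1) * (PF * (1 - PF)) + (1 - 2 * PF) * (PD * (1 - PD))) :=
          mul_nonneg hbD hC3
        have h2 : 0 ≤ (1 - 2 * PF) * (PD * (1 - PD)) * ((PD - PF) * (1 - PD - PF)) :=
          mul_nonneg (mul_nonneg hB hbF) (mul_nonneg hDF.le (by linarith))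
        have hid : (2 * PD - 1) * (PF * (1 - PF)) ^ 2 + (1 - 2 * PF) * (PD * (1 - PD)) ^ 2
            = PF * (1 - PF) *
              ((2 * PD - 1) * (PF * (1 - PF)) + (1 - 2 * PF) * (PD * (1 - PD)))
            + (1 - 2 * PF) * (PD * (1 - PD)) * ((PD - PF) * (1 - PD - PF)) := by ring
        rw [hid]; exact add_nonneg h1 h2
      · have hA : 0 ≤ 2 * PD - 1 := by linarith
        have h1 : 0 ≤ PD * (1 - PD) *
            ((2 * PD - 1) * (PF * (1 - PF)) + (1 - 2 * PF) * (PD * (1 - PD))) :=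
          mul_nonneg hbF hC3
        have h2 : 0 ≤ (2 * PD - 1) * (PF * (1 - PF)) * ((PD - PF) * (PD + PF - 1)) :=
          mul_nonneg (mul_nonneg hA hbD) (mul_nonneg hDF.le (by linarith))
        have hid : (2 * PD - 1) * (PF * (1 - PF)) ^ 2 + (1 - 2 * PF) * (PD * (1 - PD)) ^ 2
            = PD * (1 - PD) *
              ((2 * PD - 1) * (PF * (1 - PF)) + (1 - 2 * PF) * (PD * (1 - PD)))
            + (2 * PD - 1) * (PF * (1 - PF)) * ((PD - PF) * (PD + PF - 1)) := by ring
        rw [hid]; exact add_nonneg h1 h2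
    -- numerator nonneg
    have hG : 0 ≤ (σ ^ 2) ^ 3 *
          ((2 * PD - 1) * (PD * (1 - PD)) + (1 - 2 * PF) * (PF * (1 - PF)))
        + 3 * (σ ^ 2) ^ 2 * (PD * (1 - PD)) * (PF * (1 - PF)) * (2 * (PD - PF)) * (g * P)
        + 3 * (σ ^ 2) * (PD * (1 - PD)) * (PF * (1 - PF)) *
          ((2 * PD - 1) * (PF * (1 - PF)) + (1 - 2 * PF) * (PD * (1 - PD))) * (g * P) ^ 2
        + (PD * (1 - PD)) * (PF * (1 - PF)) *
          ((2 * PD - 1) * (PF * (1 - PF)) ^ 2 + (1 - 2 * PF) * (PD * (1 - PD)) ^ 2)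
          * (g * P) ^ 3 := by
      have hσ2 : (0:ℝ) ≤ σ ^ 2 := sq_nonneg σ
      have t1 : 0 ≤ (σ ^ 2) ^ 3 *
          ((2 * PD - 1) * (PD * (1 - PD)) + (1 - 2 * PF) * (PF * (1 - PF))) :=
        mul_nonneg (by positivity) hC1
      have t2 : 0 ≤ 3 * (σ ^ 2) ^ 2 * (PD * (1 - PD)) * (PF * (1 - PF)) *
          (2 * (PD - PF)) * (g * P) := by
        apply mul_nonneg _ ht
        apply mul_nonneg _ (by linarith : (0:ℝ) ≤ 2 * (PD - PF))
        apply mul_nonneg _ hbD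
        apply mul_nonneg _ hbF
        positivity
      have t3 : 0 ≤ 3 * (σ ^ 2) * (PD * (1 - PD)) * (PF * (1 - PF)) *
          ((2 * PD - 1) * (PF * (1 - PF)) + (1 - 2 * PF) * (PD * (1 - PD)))
          * (g * P) ^ 2 := by
        apply mul_nonneg _ (by positivity : (0:ℝ) ≤ (g * P) ^ 2)
        apply mul_nonneg _ hC3
        apply mul_nonneg _ hbD
        apply mul_nonneg _ hbF
        positivity
      have t4 : 0 ≤ (PD * (1 - PD)) * (PF * (1 - PF)) *
          ((2 * PD - 1) * (PF * (1 - PF)) ^ 2 + (1 - 2 * PF) * (PD * (1 - PD)) ^ 2)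
          * (g * P) ^ 3 := by
        apply mul_nonneg _ (by positivity : (0:ℝ) ≤ (g * P) ^ 3)
        exact mul_nonneg (mul_nonneg hbF hbD) hC2
      linarith [t1, t2, t3, t4]
    have hnum : 0 ≤ (alphaF PD PF - betaF PD) * betaF PD * (σ ^ 2 + betaD PF * g * P) ^ 3
        + (alphaD PD PF - betaD PF) * betaD PF * (σ ^ 2 + betaF PD * g * P) ^ 3 := by
      have hid : (alphaF PD PF - betaF PD) * betaF PD * (σ ^ 2 + betaD PF * g * P) ^ 3
          + (alphaD PD PF - betaD PF) * betaD PF * (σ ^ 2 + betaF PD * g * P) ^ 3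
          = (PD - PF) * ((σ ^ 2) ^ 3 *
          ((2 * PD - 1) * (PD * (1 - PD)) + (1 - 2 * PF) * (PF * (1 - PF)))
        + 3 * (σ ^ 2) ^ 2 * (PD * (1 - PD)) * (PF * (1 - PF)) * (2 * (PD - PF)) * (g * P)
        + 3 * (σ ^ 2) * (PD * (1 - PD)) * (PF * (1 - PF)) *
          ((2 * PD - 1) * (PF * (1 - PF)) + (1 - 2 * PF) * (PD * (1 - PD))) * (g * P) ^ 2
        + (PD * (1 - PD)) * (PF * (1 - PF)) *
          ((2 * PD - 1) * (PF * (1 - PF)) ^ 2 + (1 - 2 * PF) * (PD * (1 - PD)) ^ 2)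
          * (g * P) ^ 3) := by
        simp only [alphaF, alphaD, betaF, betaD]; ring
      rw [hid]
      exact mul_nonneg hDF.le hG
    have heq : (alphaF PD PF - betaF PD) * betaF PD / (σ ^ 2 + betaF PD * g * P) ^ 3
        + (alphaD PD PF - betaD PF) * betaD PF / (σ ^ 2 + betaD PF * g * P) ^ 3
        = ((alphaF PD PF - betaF PD) * betaF PD * (σ ^ 2 + betaD PF * g * P) ^ 3
        + (alphaD PD PF - betaD PF) * betaD PF * (σ ^ 2 + betaF PD * g * P) ^ 3)
        / ((σ ^ 2 + betaF PD * g * P) ^ 3 * (σ ^ 2 + betaD PF * g * P) ^ 3) := by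
      rw [div_add_div _ _ (pow_ne_zero 3 hd1.ne') (pow_ne_zero 3 hd2.ne')]; ring
    rw [heq]
    exact div_nonneg hnum (by positivity)
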